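/- Let X be a finite partially ordered set whose comparability graph G is connected, let T be a spanning tree of G, and let R be a ring. Then every multiplicative automorphism φ of I(X,R) factors as φ = φ₁ ∘ φ₀ (composition, in either order since these automorphisms commute), where φ₀ is a fractional automorphism of I(X,R) and φ₁ is a multiplicative automorphism of I(X,R) satisfying φ₁(e_{xy}) = e_{xy} for every tree edge x < y. -/

import Mathlib

/-- A ring automorphism of the incidence algebra is *multiplicative* if it fixes every
function supported on the diagonal and maps functions vanishing on the diagonal to
functions vanishing on the diagonal. -/
def IsMultAut {X R : Type*} [Preorder X] [LocallyFiniteOrder X] [DecidableEq X] [Ring R]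
    (φ : RingAut (IncidenceAlgebra R X)) : Prop :=
  (∀ f : IncidenceAlgebra R X, (∀ x y : X, x ≠ y → f x y = 0) → φ f = f) ∧
  (∀ f : IncidenceAlgebra R X, (∀ x : X, f x x = 0) → ∀ x : X, (φ f) x x = 0)

/-- An automorphism of the incidence algebra is a *fractional automorphism* if it is the
inner automorphism given by a diagonal unit whose diagonal entries are invertible central
elements of `R`. -/
def IsFracAut {X R : Type*} [Preorder X] [LocallyFiniteOrder X] [DecidableEq X] [Ring R]
    (φ : RingAut (IncidenceAlgebra R X)) : Prop :=
  ∃ (v : X → R) (d : (IncidenceAlgebra R X)ˣ),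
    (∀ x : X, v x ∈ Set.center R ∧ IsUnit (v x)) ∧
    (∀ x : X, (d : IncidenceAlgebra R X) x x = v x) ∧
    (∀ x y : X, x ≠ y → (d : IncidenceAlgebra R X) x y = 0) ∧
    (∀ f : IncidenceAlgebra R X, φ f = ↑d⁻¹ * f * ↑d)

/-- The comparability graph of a partially ordered set: `x` and `y` are adjacent iff
they are distinct and comparable. -/
def compGraph (X : Type*) [PartialOrder X] : SimpleGraph X where
  Adj x y := x < y ∨ y < x
  symm := ⟨fun _ _ h => h.symm⟩
  loopless := ⟨fun x h => h.elim (lt_irrefl x) (lt_irrefl x)⟩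

/-- The element `e_{xy}` of the incidence algebra: value `1` at `(x, y)` and `0`
elsewhere. -/
def eSingle {X : Type*} (R : Type*) [Ring R] [PartialOrder X] [DecidableEq X]
    (x y : X) (h : x ≤ y) : IncidenceAlgebra R X :=
  ⟨fun s t => if s = x ∧ t = y then 1 else 0, fun s t hst => by
    try dsimp only
    split_ifs with h'
    · exact absurd ((h'.1.trans_le h).trans_eq h'.2.symm) hst
    · rfl⟩



section Aux

set_option linter.unusedSectionVars false

open Finset SimpleGraph IncidenceAlgebra
open scoped Classical

variable {X R : Type*} [PartialOrder X] [LocallyFiniteOrder X] [DecidableEq X] [Ring R]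

/-- single with value r at (x,y) -/
noncomputable def rS (r : R) (x y : X) : IncidenceAlgebra R X :=
  ⟨fun s t => if s = x ∧ t = y ∧ x ≤ y then r else 0, fun s t hst => by
    split_ifs with h
    · exact absurd (show s ≤ t by rw [h.1, h.2.1]; exact h.2.2) hst
    · rfl⟩

lemma rS_apply (r : R) (x y s t : X) :
    rS r x y s t = if s = x ∧ t = y ∧ x ≤ y then r else 0 := rfl

noncomputable def diagIA (vv : X → R) : IncidenceAlgebra R X :=
  ⟨fun s t => if s = t then vv s else 0, fun s t hst => by
    split_ifs with h
    · exact absurd (h ▸ le_refl s) hst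
    · rfl⟩

lemma diagIA_apply (vv : X → R) (s t : X) : diagIA vv s t = if s = t then vv s else 0 := rfl

lemma diagIA_supported (vv : X → R) : ∀ s t : X, s ≠ t → diagIA vv s t = 0 :=
  fun _ _ h => if_neg h

lemma rS_xx_supported (r : R) (x : X) : ∀ s t : X, s ≠ t → rS r x x s t = 0 := by
  intro s t h
  rw [rS_apply]
  split_ifs with h'
  · exact absurd (h'.1.trans h'.2.1.symm) h
  · rfl

lemma rS_eq_zero_of_not_le (r : R) {x y : X} (h : ¬ x ≤ y) : rS r x y = 0 := by
  ext s t _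
  rw [rS_apply, if_neg fun hc => h hc.2.2]
  rfl

lemma rS_zero (x y : X) : rS (0 : R) x y = 0 := by
  ext s t _
  rw [rS_apply]
  split_ifs <;> rfl

lemma diagIA_mul (dd f : IncidenceAlgebra R X) (hd : ∀ s t : X, s ≠ t → dd s t = 0)
    (a b : X) : (dd * f) a b = dd a a * f a b := by
  by_cases hab : a ≤ b
  · rw [IncidenceAlgebra.mul_apply]
    refine Finset.sum_eq_single_of_mem a (Finset.mem_Icc.2 ⟨le_refl a, hab⟩) fun z hz hza => ?_
    rw [hd a z (Ne.symm hza), zero_mul]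
  · rw [apply_eq_zero_of_not_le hab (dd * f), apply_eq_zero_of_not_le hab f, mul_zero]

lemma mul_diagIA (f dd : IncidenceAlgebra R X) (hd : ∀ s t : X, s ≠ t → dd s t = 0)
    (a b : X) : (f * dd) a b = f a b * dd b b := by
  by_cases hab : a ≤ b
  · rw [IncidenceAlgebra.mul_apply]
    refine Finset.sum_eq_single_of_mem b (Finset.mem_Icc.2 ⟨hab, le_refl b⟩) fun z hz hzb => ?_
    rw [hd z b hzb, mul_zero]
  · rw [apply_eq_zero_of_not_le hab (f * dd), apply_eq_zero_of_not_le hab f, zero_mul]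

lemma diagIA_mul_diagIA (vv ww : X → R) :
    diagIA vv * diagIA ww = diagIA (fun s => vv s * ww s) := by
  ext a b hab
  rw [diagIA_mul _ _ (diagIA_supported vv), diagIA_apply, if_pos rfl, diagIA_apply, diagIA_apply]
  split_ifs with h
  · rfl
  · exact mul_zero _

lemma diagIA_mul_rS (vv : X → R) (r : R) (x y : X) :
    diagIA vv * rS r x y = rS (vv x * r) x y := by
  ext a b hab
  rw [diagIA_mul _ _ (diagIA_supported vv), diagIA_apply, if_pos rfl, rS_apply, rS_apply]
  split_ifs with h
  · rw [h.1]
  · exact mul_zero _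

lemma rS_mul_diagIA (vv : X → R) (r : R) (x y : X) :
    rS r x y * diagIA vv = rS (r * vv y) x y := by
  ext a b hab
  rw [mul_diagIA _ _ (diagIA_supported vv), diagIA_apply, if_pos rfl, rS_apply, rS_apply]
  split_ifs with h
  · rw [h.2.1]
  · exact zero_mul _

lemma rS_mul_rS_left (r s : R) (x y : X) : rS r x x * rS s x y = rS (r * s) x y := by
  ext a b hab
  rw [diagIA_mul _ _ (rS_xx_supported r x), rS_apply, rS_apply, rS_apply]
  by_cases h : a = x ∧ b = y ∧ x ≤ y
  · rw [if_pos h, if_pos h, if_pos ⟨h.1, h.1, le_refl x⟩]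
  · rw [if_neg h, if_neg h, mul_zero]

lemma rS_mul_rS_right (s r : R) (x y : X) : rS s x y * rS r y y = rS (s * r) x y := by
  ext a b hab
  rw [mul_diagIA _ _ (rS_xx_supported r y), rS_apply, rS_apply, rS_apply]
  by_cases h : a = x ∧ b = y ∧ x ≤ y
  · rw [if_pos h, if_pos h, if_pos ⟨h.2.1, h.2.1, le_refl y⟩]
  · rw [if_neg h, if_neg h, zero_mul]

lemma corner (f : IncidenceAlgebra R X) (x y : X) :
    rS (1 : R) x x * f * rS (1 : R) y y = rS (f x y) x y := by
  ext a b hab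
  rw [mul_diagIA _ _ (rS_xx_supported 1 y), diagIA_mul _ _ (rS_xx_supported 1 x),
    rS_apply, rS_apply, rS_apply]
  by_cases h1 : a = x
  · by_cases h2 : b = y
    · have hxy : x ≤ y := by rw [← h1, ← h2]; exact hab
      rw [if_pos ⟨h1, h1, le_refl x⟩, if_pos ⟨h2, h2, le_refl y⟩, if_pos ⟨h1, h2, hxy⟩,
        one_mul, mul_one, h1, h2]
    · rw [if_neg (show ¬(b = y ∧ b = y ∧ y ≤ y) from fun hc => h2 hc.1), mul_zero,
        if_neg (show ¬(a = x ∧ b = y ∧ x ≤ y) from fun hc => h2 hc.2.1)]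
  · rw [if_neg fun hc => h1 hc.1, zero_mul, zero_mul, if_neg fun hc => h1 hc.1]

end Aux

section Aut

set_option linter.unusedSectionVars false

open Finset SimpleGraph IncidenceAlgebra
open scoped Classical

variable {X R : Type*} [PartialOrder X] [LocallyFiniteOrder X] [DecidableEq X] [Ring R]

lemma ringAut_mul_apply (φ ψ : RingAut (IncidenceAlgebra R X)) (f : IncidenceAlgebra R X) :
    (φ * ψ) f = φ (ψ f) := rfl

noncomputable def cc (φ : RingAut (IncidenceAlgebra R X)) (x y : X) : R :=
  φ (rS (1 : R) x y) x y

lemma isMultAut_mul {φ ψ : RingAut (IncidenceAlgebra R X)} (hφ : IsMultAut φ)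
    (hψ : IsMultAut ψ) : IsMultAut (φ * ψ) := by
  constructor
  · intro f hf
    rw [ringAut_mul_apply, hψ.1 f hf, hφ.1 f hf]
  · intro f hf x
    rw [ringAut_mul_apply]
    exact hφ.2 (ψ f) (hψ.2 f hf) x

lemma isMultAut_inv (φ : RingAut (IncidenceAlgebra R X)) (hφ : IsMultAut φ) :
    IsMultAut φ⁻¹ := by
  constructor
  · intro f hf
    conv_lhs => rw [← hφ.1 f hf]
    exact φ.symm_apply_apply f
  · intro f hf x
    have happ : φ (φ⁻¹ f) = f := φ.apply_symm_apply f
    have hzero : (φ (φ⁻¹ f - diagIA fun z => (φ⁻¹ f) z z)) x x = 0 :=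
      hφ.2 _ (fun z => by
        rw [IncidenceAlgebra.sub_apply, diagIA_apply, if_pos rfl, sub_self]) x
    have key : f = diagIA (fun z => (φ⁻¹ f) z z)
        + φ (φ⁻¹ f - diagIA fun z => (φ⁻¹ f) z z) := by
      conv_lhs => rw [← happ]
      conv_lhs => rw [show φ⁻¹ f = diagIA (fun z => (φ⁻¹ f) z z)
        + (φ⁻¹ f - diagIA fun z => (φ⁻¹ f) z z) from (add_sub_cancel _ _).symm]
      rw [map_add, hφ.1 _ (diagIA_supported _)]
    have h2 : f x x = (φ⁻¹ f) x x := by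
      conv_lhs => rw [key]
      rw [IncidenceAlgebra.add_apply, diagIA_apply, if_pos rfl, hzero, add_zero]
    exact h2.symm.trans (hf x)

lemma phi_rS_one (φ : RingAut (IncidenceAlgebra R X)) (hφ : IsMultAut φ) (x y : X) :
    φ (rS (1 : R) x y) = rS (cc φ x y) x y := by
  by_cases hxy : x ≤ y
  · have h0 : rS (1 : R) x y = rS 1 x x * rS 1 x y * rS 1 y y := by
      rw [corner, rS_apply, if_pos ⟨rfl, rfl, hxy⟩]
    conv_lhs => rw [h0]
    rw [map_mul, map_mul, hφ.1 _ (rS_xx_supported 1 x), hφ.1 _ (rS_xx_supported 1 y),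
      mul_assoc, ← mul_assoc, corner]
    rfl
  · have h0 : rS (1 : R) x y = 0 := rS_eq_zero_of_not_le _ hxy
    show φ (rS 1 x y) = rS (φ (rS (1:R) x y) x y) x y
    rw [h0, map_zero, IncidenceAlgebra.zero_apply, rS_zero]

lemma phi_rS (φ : RingAut (IncidenceAlgebra R X)) (hφ : IsMultAut φ) (r : R) (x y : X) :
    φ (rS r x y) = rS (r * cc φ x y) x y := by
  rw [show rS r x y = rS r x x * rS (1 : R) x y by rw [rS_mul_rS_left, mul_one],
    map_mul, hφ.1 _ (rS_xx_supported r x), phi_rS_one φ hφ, rS_mul_rS_left]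

lemma cc_inv_mul (φ : RingAut (IncidenceAlgebra R X)) (hφ : IsMultAut φ) (x y : X)
    (h : x ≤ y) : cc φ⁻¹ x y * cc φ x y = 1 := by
  have h1 : φ (φ⁻¹ (rS (1 : R) x y)) = rS 1 x y := φ.apply_symm_apply _
  rw [phi_rS_one φ⁻¹ (isMultAut_inv φ hφ), phi_rS φ hφ] at h1
  have h2 := congrFun (DFunLike.congr_fun h1 x) y
  rwa [rS_apply, rS_apply, if_pos ⟨rfl, rfl, h⟩, if_pos ⟨rfl, rfl, h⟩] at h2

lemma cc_mul_inv (φ : RingAut (IncidenceAlgebra R X)) (hφ : IsMultAut φ) (x y : X)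
    (h : x ≤ y) : cc φ x y * cc φ⁻¹ x y = 1 := by
  have h1 : φ⁻¹ (φ (rS (1 : R) x y)) = rS 1 x y := φ.symm_apply_apply _
  rw [phi_rS_one φ hφ, phi_rS φ⁻¹ (isMultAut_inv φ hφ)] at h1
  have h2 := congrFun (DFunLike.congr_fun h1 x) y
  rwa [rS_apply, rS_apply, if_pos ⟨rfl, rfl, h⟩, if_pos ⟨rfl, rfl, h⟩] at h2

lemma cc_center (φ : RingAut (IncidenceAlgebra R X)) (hφ : IsMultAut φ) (x y : X) :
    cc φ x y ∈ Set.center R := by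
  by_cases hxy : x ≤ y
  · rw [Semigroup.mem_center_iff]
    intro r
    have h1 : diagIA (fun _ : X => r) * rS (1 : R) x y
        = rS (1 : R) x y * diagIA (fun _ : X => r) := by
      rw [diagIA_mul_rS, rS_mul_diagIA, mul_one, one_mul]
    have h2 := congrArg φ h1
    rw [map_mul, map_mul, hφ.1 _ (diagIA_supported _), phi_rS_one φ hφ, diagIA_mul_rS,
      rS_mul_diagIA] at h2
    have h3 := congrFun (DFunLike.congr_fun h2 x) y
    rwa [rS_apply, rS_apply, if_pos ⟨rfl, rfl, hxy⟩, if_pos ⟨rfl, rfl, hxy⟩] at h3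
  · have h0 : cc φ x y = 0 := by
      show φ (rS (1 : R) x y) x y = 0
      rw [rS_eq_zero_of_not_le _ hxy, map_zero]
      rfl
    rw [h0]
    exact Set.zero_mem_center

/-- The unit of `R` with value `cc φ x y`. -/
noncomputable def ccu (φ : RingAut (IncidenceAlgebra R X)) (hφ : IsMultAut φ) {x y : X}
    (h : x ≤ y) : Rˣ :=
  ⟨cc φ x y, cc φ⁻¹ x y, cc_mul_inv φ hφ x y h, cc_inv_mul φ hφ x y h⟩

end Aut

section Graph

set_option linter.unusedSectionVars false

open Finset SimpleGraph IncidenceAlgebra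
open scoped Classical

variable {X R : Type*} [PartialOrder X] [LocallyFiniteOrder X] [DecidableEq X] [Ring R]

/-- The weight of a tree edge. -/
noncomputable def wE (φ : RingAut (IncidenceAlgebra R X)) (hφ : IsMultAut φ)
    (T : SimpleGraph X) (hT : T ≤ compGraph X) {a b : X} (hab : T.Adj a b) : Rˣ :=
  if h : a < b then ccu φ hφ h.le
  else (ccu φ hφ ((Or.resolve_left (hT hab : a < b ∨ b < a) h).le))⁻¹

lemma wE_symm (φ : RingAut (IncidenceAlgebra R X)) (hφ : IsMultAut φ)
    (T : SimpleGraph X) (hT : T ≤ compGraph X) {a b : X} (hab : T.Adj a b) :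
    wE φ hφ T hT hab.symm = (wE φ hφ T hT hab)⁻¹ := by
  unfold wE
  by_cases h : a < b
  · rw [dif_pos h, dif_neg (asymm h)]
  · have h' : b < a := Or.resolve_left (hT hab : a < b ∨ b < a) h
    rw [dif_pos h', dif_neg h, inv_inv]

lemma wE_center (φ : RingAut (IncidenceAlgebra R X)) (hφ : IsMultAut φ)
    (T : SimpleGraph X) (hT : T ≤ compGraph X) {a b : X} (hab : T.Adj a b) :
    ((wE φ hφ T hT hab : Rˣ) : R) ∈ Set.center R := by
  unfold wE
  by_cases h : a < b
  · rw [dif_pos h]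
    exact cc_center φ hφ a b
  · rw [dif_neg h]
    exact Set.units_inv_mem_center (cc_center φ hφ b a)

/-- The weight of a walk in the tree. -/
noncomputable def Wk (φ : RingAut (IncidenceAlgebra R X)) (hφ : IsMultAut φ)
    (T : SimpleGraph X) (hT : T ≤ compGraph X) : ∀ {a b : X}, T.Walk a b → Rˣ
  | _, _, SimpleGraph.Walk.nil => 1
  | _, _, SimpleGraph.Walk.cons h p => wE φ hφ T hT h * Wk φ hφ T hT p

lemma Wk_append (φ : RingAut (IncidenceAlgebra R X)) (hφ : IsMultAut φ)
    (T : SimpleGraph X) (hT : T ≤ compGraph X) {a b c : X} (p : T.Walk a b)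
    (q : T.Walk b c) :
    Wk φ hφ T hT (p.append q) = Wk φ hφ T hT p * Wk φ hφ T hT q := by
  induction p with
  | nil => simp only [SimpleGraph.Walk.nil_append, Wk, one_mul]
  | cons h p ih =>
    rw [SimpleGraph.Walk.cons_append]
    simp only [Wk]
    rw [ih, mul_assoc]

lemma Wk_concat (φ : RingAut (IncidenceAlgebra R X)) (hφ : IsMultAut φ)
    (T : SimpleGraph X) (hT : T ≤ compGraph X) {a b c : X} (p : T.Walk a b)
    (h : T.Adj b c) :
    Wk φ hφ T hT (p.concat h) = Wk φ hφ T hT p * wE φ hφ T hT h := by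
  rw [SimpleGraph.Walk.concat_eq_append, Wk_append]
  simp only [Wk, mul_one]

lemma Wk_center (φ : RingAut (IncidenceAlgebra R X)) (hφ : IsMultAut φ)
    (T : SimpleGraph X) (hT : T ≤ compGraph X) {a b : X} (p : T.Walk a b) :
    ((Wk φ hφ T hT p : Rˣ) : R) ∈ Set.center R := by
  induction p with
  | nil => exact Set.one_mem_center
  | cons h p ih =>
    simp only [Wk, Units.val_mul]
    exact Set.mul_mem_center (wE_center φ hφ T hT h) ih

/-- The vertex weights, defined by transporting along paths from a fixed root. -/
noncomputable def vfun (φ : RingAut (IncidenceAlgebra R X)) (hφ : IsMultAut φ)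
    (T : SimpleGraph X) (hT : T ≤ compGraph X) (hTconn : T.Connected) (x₀ : X)
    (x : X) : Rˣ :=
  Wk φ hφ T hT (((hTconn.preconnected x₀ x).some).toPath : T.Walk x₀ x)

lemma vfun_center (φ : RingAut (IncidenceAlgebra R X)) (hφ : IsMultAut φ)
    (T : SimpleGraph X) (hT : T ≤ compGraph X) (hTconn : T.Connected) (x₀ : X)
    (x : X) : ((vfun φ hφ T hT hTconn x₀ x : Rˣ) : R) ∈ Set.center R :=
  Wk_center φ hφ T hT _

lemma vfun_key (φ : RingAut (IncidenceAlgebra R X)) (hφ : IsMultAut φ)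
    (T : SimpleGraph X) (hT : T ≤ compGraph X) (hTconn : T.Connected)
    (hTacyc : T.IsAcyclic) (x₀ : X) {x y : X} (hxy : x < y) (hadj : T.Adj x y) :
    vfun φ hφ T hT hTconn x₀ y = vfun φ hφ T hT hTconn x₀ x * ccu φ hφ hxy.le := by
  set q : T.Path x₀ x := (hTconn.preconnected x₀ x).some.toPath with hq
  set qy : T.Path x₀ y := (hTconn.preconnected x₀ y).some.toPath with hqy
  have hwxy : wE φ hφ T hT hadj = ccu φ hφ hxy.le := dif_pos hxy
  show Wk φ hφ T hT (qy : T.Walk x₀ y) = Wk φ hφ T hT (q : T.Walk x₀ x) * ccu φ hφ hxy.le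
  by_cases hy : y ∈ (q : T.Walk x₀ x).support
  · have hsplit := SimpleGraph.Walk.take_spec (q : T.Walk x₀ x) hy
    have htake : ((q : T.Walk x₀ x).takeUntil y hy).IsPath := q.2.takeUntil hy
    have hdrop : ((q : T.Walk x₀ x).dropUntil y hy).IsPath := q.2.dropUntil hy
    have huniq : (⟨_, hdrop⟩ : T.Path y x) = SimpleGraph.Path.singleton hadj.symm :=
      hTacyc.path_unique _ _
    have hdropeq : (q : T.Walk x₀ x).dropUntil y hy
        = SimpleGraph.Walk.cons hadj.symm SimpleGraph.Walk.nil :=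
      congrArg Subtype.val huniq
    have h1 : Wk φ hφ T hT (q : T.Walk x₀ x)
        = Wk φ hφ T hT ((q : T.Walk x₀ x).takeUntil y hy) * wE φ hφ T hT hadj.symm := by
      conv_lhs => rw [← hsplit]
      rw [Wk_append, hdropeq]
      simp only [Wk, mul_one]
    have huniq2 : qy = (⟨_, htake⟩ : T.Path x₀ y) := hTacyc.path_unique _ _
    have h2 : (qy : T.Walk x₀ y) = (q : T.Walk x₀ x).takeUntil y hy := by rw [huniq2]
    rw [h2, h1, wE_symm φ hφ T hT hadj, hwxy, mul_assoc, inv_mul_cancel, mul_one]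
  · have hconcat : ((q : T.Walk x₀ x).concat hadj).IsPath := by
      rw [← SimpleGraph.Walk.isPath_reverse_iff, SimpleGraph.Walk.reverse_concat]
      exact (q.2.reverse).cons (by rw [SimpleGraph.Walk.support_reverse]
                                   exact fun hc => hy (List.mem_reverse.1 hc))
    have huniq3 : qy = (⟨_, hconcat⟩ : T.Path x₀ y) := hTacyc.path_unique _ _
    have h3 : (qy : T.Walk x₀ y) = (q : T.Walk x₀ x).concat hadj := by rw [huniq3]
    rw [h3, Wk_concat, hwxy]

end Graph

section Conj

set_option linter.unusedSectionVars false

open Finset SimpleGraph IncidenceAlgebra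
open scoped Classical

/-- Conjugation by a unit, as a ring automorphism. -/
def conjAut {A : Type*} [Ring A] (u : Aˣ) : RingAut A where
  toFun f := ↑u⁻¹ * f * ↑u
  invFun f := ↑u * f * ↑u⁻¹
  left_inv f := by
    simp only [mul_assoc, Units.mul_inv_cancel_left, Units.inv_mul_cancel_left,
      Units.mul_inv, Units.inv_mul, mul_one, one_mul]
  right_inv f := by
    simp only [mul_assoc, Units.mul_inv_cancel_left, Units.inv_mul_cancel_left,
      Units.mul_inv, Units.inv_mul, mul_one, one_mul]
  map_add' f g := by rw [mul_add, add_mul]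
  map_mul' f g := by
    simp only [mul_assoc, Units.mul_inv_cancel_left]

lemma conjAut_apply {A : Type*} [Ring A] (u : Aˣ) (f : A) : conjAut u f = ↑u⁻¹ * f * ↑u :=
  rfl

lemma conjAut_inv_apply {A : Type*} [Ring A] (u : Aˣ) (f : A) :
    (conjAut u)⁻¹ f = ↑u * f * ↑u⁻¹ := rfl

variable {X R : Type*} [PartialOrder X] [LocallyFiniteOrder X] [DecidableEq X] [Ring R]

/-- The diagonal unit built from a family of units of `R`. -/
noncomputable def Dunit (vv : X → Rˣ) : (IncidenceAlgebra R X)ˣ where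
  val := diagIA fun x => (vv x : R)
  inv := diagIA fun x => (((vv x)⁻¹ : Rˣ) : R)
  val_inv := by
    rw [diagIA_mul_diagIA]
    ext a b hab
    rw [diagIA_apply, IncidenceAlgebra.one_apply]
    split_ifs with h
    · exact Units.mul_inv _
    · rfl
  inv_val := by
    rw [diagIA_mul_diagIA]
    ext a b hab
    rw [diagIA_apply, IncidenceAlgebra.one_apply]
    split_ifs with h
    · exact Units.inv_mul _
    · rfl

lemma Dunit_val (vv : X → Rˣ) :
    ((Dunit vv : (IncidenceAlgebra R X)ˣ) : IncidenceAlgebra R X)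
      = diagIA fun x => (vv x : R) := rfl

lemma Dunit_inv_val (vv : X → Rˣ) :
    (((Dunit vv)⁻¹ : (IncidenceAlgebra R X)ˣ) : IncidenceAlgebra R X)
      = diagIA fun x => (((vv x)⁻¹ : Rˣ) : R) := rfl

lemma conjD_isMultAut (vv : X → Rˣ) (hc : ∀ x : X, ((vv x : Rˣ) : R) ∈ Set.center R) :
    IsMultAut (conjAut (Dunit vv)) := by
  constructor
  · intro f hf
    rw [conjAut_apply, Dunit_val, Dunit_inv_val]
    ext a b hab
    rw [mul_diagIA _ _ (diagIA_supported _) a b, diagIA_mul _ _ (diagIA_supported _) a b,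
      diagIA_apply, diagIA_apply, if_pos rfl, if_pos rfl]
    by_cases h : a = b
    · subst h
      have hcom := (Semigroup.mem_center_iff.1 (hc a)) (f a a)
      rw [mul_assoc, hcom, Units.inv_mul_cancel_left]
    · rw [hf a b h, mul_zero, zero_mul]
  · intro f hf x
    rw [conjAut_apply, Dunit_val, Dunit_inv_val, mul_diagIA _ _ (diagIA_supported _) x x,
      diagIA_mul _ _ (diagIA_supported _) x x, hf x, mul_zero, zero_mul]

end Conj

section ESingle

set_option linter.unusedSectionVars false

open scoped Classical

variable {X R : Type*} [PartialOrder X] [LocallyFiniteOrder X] [DecidableEq X] [Ring R]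

lemma eSingle_eq_rS (x y : X) (h : x ≤ y) : eSingle R x y h = rS (1 : R) x y := by
  ext s t hst
  show (if s = x ∧ t = y then (1 : R) else 0) = _
  rw [rS_apply]
  by_cases hc : s = x ∧ t = y
  · rw [if_pos hc, if_pos ⟨hc.1, hc.2, h⟩]
  · rw [if_neg hc, if_neg fun hc' => hc ⟨hc'.1, hc'.2.1⟩]

end ESingle

/-- For a finite poset with connected comparability graph and a spanning
tree `T`, every multiplicative automorphism factors as the product (in either order) of a
fractional automorphism and a multiplicative automorphism fixing all `e_{xy}` for tree
edges `x < y` (Theorem 3.6, decomposition part). -/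
theorem mult_aut_factors_through_tree {X R : Type*} [PartialOrder X] [Fintype X]
    [LocallyFiniteOrder X] [DecidableEq X] [Ring R]
    (hG : (compGraph X).Connected)
    (T : SimpleGraph X) (hT : T ≤ compGraph X) (hTconn : T.Connected)
    (hTacyc : T.IsAcyclic)
    (φ : RingAut (IncidenceAlgebra R X)) (hφ : IsMultAut φ) :
    ∃ φ₀ φ₁ : RingAut (IncidenceAlgebra R X),
      IsFracAut φ₀ ∧ IsMultAut φ₁ ∧
      (∀ (x y : X) (h : x < y), T.Adj x y →
        φ₁ (eSingle R x y h.le) = eSingle R x y h.le) ∧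
      φ = φ₁ * φ₀ ∧ φ = φ₀ * φ₁ := by
    classical
  haveI hne : Nonempty X := hTconn.nonempty
  set x₀ : X := Classical.arbitrary X with hx₀
  set v : X → Rˣ := vfun φ hφ T hT hTconn x₀ with hv
  have hvc : ∀ x : X, ((v x : Rˣ) : R) ∈ Set.center R := fun x =>
    vfun_center φ hφ T hT hTconn x₀ x
  refine ⟨conjAut (Dunit v), φ * (conjAut (Dunit v))⁻¹, ?_, ?_, ?_, ?_, ?_⟩
  · exact ⟨fun x => ((v x : Rˣ) : R), Dunit v,
      fun x => ⟨hvc x, (v x).isUnit⟩,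
      fun x => by rw [Dunit_val, diagIA_apply, if_pos rfl],
      fun x y h => by rw [Dunit_val]; exact diagIA_supported _ x y h,
      fun f => rfl⟩
  · exact isMultAut_mul hφ (isMultAut_inv _ (conjD_isMultAut v hvc))
  · intro x y hxy hadj
    have he : eSingle R x y hxy.le = rS (1 : R) x y := eSingle_eq_rS x y hxy.le
    rw [he, ringAut_mul_apply]
    have hkey : v y = v x * ccu φ hφ hxy.le := by
      rw [hv]
      exact vfun_key φ hφ T hT hTconn hTacyc x₀ hxy hadj
    have h1 : (conjAut (Dunit v))⁻¹ (rS (1 : R) x y)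
        = rS (((ccu φ hφ hxy.le)⁻¹ : Rˣ) : R) x y := by
      rw [conjAut_inv_apply, Dunit_val, Dunit_inv_val, diagIA_mul_rS, rS_mul_diagIA]
      congr 1
      rw [mul_one, hkey, mul_inv_rev, Units.val_mul, ← mul_assoc,
        Semigroup.mem_center_iff.1
          (Set.units_inv_mem_center
            (show ((ccu φ hφ hxy.le : Rˣ) : R) ∈ Set.center R from cc_center φ hφ x y))
          ((v x : Rˣ) : R),
        mul_assoc, Units.mul_inv, mul_one]
    rw [h1, phi_rS φ hφ]
    congr 1
    rw [show cc φ x y = ((ccu φ hφ hxy.le : Rˣ) : R) from rfl]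
    exact Units.inv_mul _
  · exact (inv_mul_cancel_right φ (conjAut (Dunit v))).symm
  · have hcomm : conjAut (Dunit v) * φ = φ * conjAut (Dunit v) := by
      apply RingEquiv.ext
      intro f
      have hd1 : φ ((↑(Dunit v)⁻¹ : IncidenceAlgebra R X)) = ↑(Dunit v)⁻¹ :=
        hφ.1 _ (fun x y hxy => diagIA_supported (fun z => (((v z)⁻¹ : Rˣ) : R)) x y hxy)
      have hd2 : φ ((↑(Dunit v) : IncidenceAlgebra R X)) = ↑(Dunit v) :=
        hφ.1 _ (fun x y hxy => diagIA_supported (fun z => ((v z : Rˣ) : R)) x y hxy)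
      rw [ringAut_mul_apply, ringAut_mul_apply, conjAut_apply, conjAut_apply,
        map_mul, map_mul, hd1, hd2]
    rw [← mul_assoc, hcomm, mul_assoc, mul_inv_cancel, mul_one]
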